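/- Let (g₀,⟨·,·⟩₀) be an Einstein metric Lie algebra with ric₀ = c⟨·,·⟩₀. Then the complexification g = g₀ ⊕ i g₀ (as a real Lie algebra) with metric ⟨x₁+iy₁,x₂+iy₂⟩' = ⟨x₁,x₂⟩₀ − ⟨y₁,y₂⟩₀ is Einstein with Einstein constant 2c: its Ricci tensor satisfies ric' = 2c⟨·,·⟩'. -/

import Mathlib

/-- The Ricci tensor of a left-invariant metric determined by a connection `nabla`:
`ric(x,y) = tr (ξ ↦ ∇_ξ ∇_x y − ∇_x ∇_ξ y − ∇_{[ξ,x]} y)`. -/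
noncomputable def ricci {g : Type*} [LieRing g] [LieAlgebra ℝ g]
    (nabla : g →ₗ[ℝ] g →ₗ[ℝ] g) (x y : g) : ℝ :=
  LinearMap.trace ℝ g
    (nabla.flip (nabla x y) - nabla x ∘ₗ nabla.flip y +
      nabla.flip y ∘ₗ (LieAlgebra.ad ℝ g x : g →ₗ[ℝ] g))

/-- `nabla` is the Levi-Civita connection of the metric Lie algebra `(g, B)`
(Koszul formula). -/
def IsLeviCivita {g : Type*} [LieRing g] [LieAlgebra ℝ g]
    (B : g →ₗ[ℝ] g →ₗ[ℝ] ℝ) (nabla : g →ₗ[ℝ] g →ₗ[ℝ] g) : Prop :=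
  ∀ x y z : g, 2 * B (nabla x y) z = B ⁅x, y⁆ z - B ⁅y, z⁆ x + B ⁅z, x⁆ y

/-- Ricci-parallel: `(∇_x ric)(y,z) = −ric(∇_x y, z) − ric(y, ∇_x z) = 0`. -/
noncomputable def IsRicciParallel {g : Type*} [LieRing g] [LieAlgebra ℝ g]
    (nabla : g →ₗ[ℝ] g →ₗ[ℝ] g) : Prop :=
  ∀ x y z : g, ricci nabla (nabla x y) z + ricci nabla y (nabla x z) = 0


/-- If (g₀,⟨·,·⟩₀) is Einstein with constant c, its complexification with the
metric ⟨·,·⟩' is Einstein with constant 2c. -/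
lemma trace_block {M P : Type*} [AddCommGroup M] [Module ℝ M] [AddCommGroup P] [Module ℝ P]
    [FiniteDimensional ℝ M] [FiniteDimensional ℝ P]
    (e : (M × M) ≃ₗ[ℝ] P) (T : P →ₗ[ℝ] P) (A B C D : M →ₗ[ℝ] M)
    (hT : ∀ s t : M, T (e (s, t)) = e (A s + B t, C s + D t)) :
    LinearMap.trace ℝ P T = LinearMap.trace ℝ M A + LinearMap.trace ℝ M D := by
  set S : (M × M) →ₗ[ℝ] (M × M) :=
    LinearMap.prodMap A D + LinearMap.inl ℝ M M ∘ₗ (B ∘ₗ LinearMap.snd ℝ M M)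
      + LinearMap.inr ℝ M M ∘ₗ (C ∘ₗ LinearMap.fst ℝ M M) with hSdef
  have hS : ∀ q : M × M, S q = (A q.1 + B q.2, C q.1 + D q.2) := by
    intro q
    simp [hSdef, Prod.ext_iff]; abel
  have hTe : T = e.conj S := by
    apply LinearMap.ext
    intro p
    obtain ⟨q, rfl⟩ := e.surjective p
    rw [LinearEquiv.conj_apply]
    simp only [LinearMap.comp_apply, LinearEquiv.coe_coe, LinearEquiv.symm_apply_apply]
    rw [hS, ← hT q.1 q.2]
  rw [hTe, LinearMap.trace_conj', hSdef, map_add, map_add, LinearMap.trace_prodMap']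
  have h1 : LinearMap.trace ℝ (M × M) (LinearMap.inl ℝ M M ∘ₗ (B ∘ₗ LinearMap.snd ℝ M M)) = 0 := by
    rw [LinearMap.trace_comp_comm']
    simp [LinearMap.comp_assoc]
  have h2 : LinearMap.trace ℝ (M × M) (LinearMap.inr ℝ M M ∘ₗ (C ∘ₗ LinearMap.fst ℝ M M)) = 0 := by
    rw [LinearMap.trace_comp_comm']
    simp [LinearMap.comp_assoc]
  rw [h1, h2]
  ring

lemma ricci_add_left {g : Type*} [LieRing g] [LieAlgebra ℝ g]
    (nabla : g →ₗ[ℝ] g →ₗ[ℝ] g) (a b y : g) :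
    ricci nabla (a + b) y = ricci nabla a y + ricci nabla b y := by
  unfold ricci
  rw [← map_add]
  congr 1
  simp only [map_add, LinearMap.add_apply, LinearMap.add_comp,
    LinearMap.comp_add]
  abel

lemma ricci_add_right {g : Type*} [LieRing g] [LieAlgebra ℝ g]
    (nabla : g →ₗ[ℝ] g →ₗ[ℝ] g) (x a b : g) :
    ricci nabla x (a + b) = ricci nabla x a + ricci nabla x b := by
  unfold ricci
  rw [← map_add]
  congr 1
  simp only [map_add, LinearMap.add_apply, LinearMap.add_comp, LinearMap.comp_add]
  abel

theorem stmt_8 (g₀ : Type*) [LieRing g₀] [LieAlgebra ℝ g₀] [FiniteDimensional ℝ g₀]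
    (B₀ : g₀ →ₗ[ℝ] g₀ →ₗ[ℝ] ℝ)
    (hsymm₀ : ∀ x y : g₀, B₀ x y = B₀ y x)
    (hnd₀ : ∀ x : g₀, (∀ y : g₀, B₀ x y = 0) → x = 0)
    (nabla₀ : g₀ →ₗ[ℝ] g₀ →ₗ[ℝ] g₀)
    (hLC₀ : IsLeviCivita B₀ nabla₀)
    (g : Type*) [LieRing g] [LieAlgebra ℝ g] [FiniteDimensional ℝ g]
    (ι κ : g₀ →ₗ[ℝ] g)
    (hsurj : ∀ w : g, ∃ x y : g₀, w = ι x + κ y)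
    (hbr : ∀ x₁ y₁ x₂ y₂ : g₀,
      ⁅ι x₁ + κ y₁, ι x₂ + κ y₂⁆
        = ι (⁅x₁, x₂⁆ - ⁅y₁, y₂⁆) + κ (⁅x₁, y₂⁆ + ⁅y₁, x₂⁆))
    (B' : g →ₗ[ℝ] g →ₗ[ℝ] ℝ)
    (hB' : ∀ x₁ y₁ x₂ y₂ : g₀,
      B' (ι x₁ + κ y₁) (ι x₂ + κ y₂) = B₀ x₁ x₂ - B₀ y₁ y₂)
    (hnd' : ∀ w : g, (∀ z : g, B' w z = 0) → w = 0)
    (nabla' : g →ₗ[ℝ] g →ₗ[ℝ] g)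
    (hLC' : IsLeviCivita B' nabla')
    (c : ℝ)
    (hE : ∀ x y : g₀, ricci nabla₀ x y = c * B₀ x y) :
    ∀ u w : g, ricci nabla' u w = 2 * c * B' u w := by
  -- bracket relations
  have brii : ∀ x y : g₀, ⁅ι x, ι y⁆ = ι ⁅x, y⁆ := fun x y => by
    simpa using hbr x 0 y 0
  have brik : ∀ x y : g₀, ⁅ι x, κ y⁆ = κ ⁅x, y⁆ := fun x y => by
    simpa using hbr x 0 0 y
  have brki : ∀ x y : g₀, ⁅κ x, ι y⁆ = κ ⁅x, y⁆ := fun x y => by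
    simpa using hbr 0 x y 0
  have brkk : ∀ x y : g₀, ⁅κ x, κ y⁆ = -ι ⁅x, y⁆ := fun x y => by
    have h := hbr 0 x 0 y
    simp only [map_zero, zero_add, add_zero, zero_lie, lie_zero, zero_sub, map_neg] at h
    exact h
  -- metric relations
  have Bii : ∀ x y : g₀, B' (ι x) (ι y) = B₀ x y := fun x y => by
    simpa using hB' x 0 y 0
  have Bik : ∀ x y : g₀, B' (ι x) (κ y) = 0 := fun x y => by
    simpa using hB' x 0 0 y
  have Bki : ∀ x y : g₀, B' (κ x) (ι y) = 0 := fun x y => by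
    simpa using hB' 0 x y 0
  have Bkk : ∀ x y : g₀, B' (κ x) (κ y) = -(B₀ x y) := fun x y => by
    simpa using hB' 0 x 0 y
  -- extensionality via the metric
  have ext' : ∀ w₁ w₂ : g, (∀ p : g₀, B' w₁ (ι p) = B' w₂ (ι p)) →
      (∀ q : g₀, B' w₁ (κ q) = B' w₂ (κ q)) → w₁ = w₂ := by
    intro w₁ w₂ hι hκ
    rw [← sub_eq_zero]
    apply hnd'
    intro z
    obtain ⟨p, q, rfl⟩ := hsurj z
    simp only [map_sub, LinearMap.sub_apply, map_add]
    rw [hι p, hκ q]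
    ring
  -- connection formulas
  have hnii : ∀ x y : g₀, nabla' (ι x) (ι y) = ι (nabla₀ x y) := by
    intro x y
    apply ext'
    · intro p
      have h := hLC' (ι x) (ι y) (ι p)
      have h0 := hLC₀ x y p
      simp only [brii, brik, brki, brkk, map_neg, LinearMap.neg_apply, Bii, Bik, Bki, Bkk] at h ⊢
      linarith
    · intro p
      have h := hLC' (ι x) (ι y) (κ p)
      have h0 := hLC₀ x y p
      simp only [brii, brik, brki, brkk, map_neg, LinearMap.neg_apply, Bii, Bik, Bki, Bkk] at h ⊢
      linarith
  have hnik : ∀ x y : g₀, nabla' (ι x) (κ y) = κ (nabla₀ x y) := by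
    intro x y
    apply ext'
    · intro p
      have h := hLC' (ι x) (κ y) (ι p)
      have h0 := hLC₀ x y p
      simp only [brii, brik, brki, brkk, map_neg, LinearMap.neg_apply, Bii, Bik, Bki, Bkk] at h ⊢
      linarith
    · intro p
      have h := hLC' (ι x) (κ y) (κ p)
      have h0 := hLC₀ x y p
      simp only [brii, brik, brki, brkk, map_neg, LinearMap.neg_apply, Bii, Bik, Bki, Bkk] at h ⊢
      linarith
  have hnki : ∀ x y : g₀, nabla' (κ x) (ι y) = κ (nabla₀ x y) := by
    intro x y
    apply ext'
    · intro p
      have h := hLC' (κ x) (ι y) (ι p)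
      have h0 := hLC₀ x y p
      simp only [brii, brik, brki, brkk, map_neg, LinearMap.neg_apply, Bii, Bik, Bki, Bkk] at h ⊢
      linarith
    · intro p
      have h := hLC' (κ x) (ι y) (κ p)
      have h0 := hLC₀ x y p
      simp only [brii, brik, brki, brkk, map_neg, LinearMap.neg_apply, Bii, Bik, Bki, Bkk] at h ⊢
      linarith
  have hnkk : ∀ x y : g₀, nabla' (κ x) (κ y) = -ι (nabla₀ x y) := by
    intro x y
    apply ext'
    · intro p
      have h := hLC' (κ x) (κ y) (ι p)
      have h0 := hLC₀ x y p
      simp only [brii, brik, brki, brkk, map_neg, LinearMap.neg_apply, Bii, Bik, Bki, Bkk] at h ⊢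
      linarith
    · intro p
      have h := hLC' (κ x) (κ y) (κ p)
      have h0 := hLC₀ x y p
      simp only [brii, brik, brki, brkk, map_neg, LinearMap.neg_apply, Bii, Bik, Bki, Bkk] at h ⊢
      linarith
  -- the linear equivalence  g₀ × g₀ ≃ g
  set f : (g₀ × g₀) →ₗ[ℝ] g := ι ∘ₗ LinearMap.fst ℝ g₀ g₀ + κ ∘ₗ LinearMap.snd ℝ g₀ g₀ with hfdef
  have hf : ∀ p : g₀ × g₀, f p = ι p.1 + κ p.2 := fun p => rfl
  have hbij : Function.Bijective f := by
    constructor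
    · intro p q hpq
      rw [hf, hf] at hpq
      have key : ∀ a b : g₀, ι a + κ b = 0 → a = 0 ∧ b = 0 := by
        intro a b hab
        constructor
        · apply hnd₀
          intro z
          have h2 := hB' a b z 0
          rw [hab] at h2
          simp only [map_zero, add_zero, LinearMap.zero_apply, sub_zero] at h2
          linarith
        · apply hnd₀
          intro z
          have h2 := hB' a b 0 z
          rw [hab] at h2
          simp only [map_zero, zero_add, LinearMap.zero_apply, zero_sub] at h2
          linarith
      have : (p.1 - q.1) = 0 ∧ (p.2 - q.2) = 0 := by
        apply key
        rw [map_sub, map_sub]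
        rw [sub_add_sub_comm, hpq, sub_self]
      exact Prod.ext (sub_eq_zero.mp this.1) (sub_eq_zero.mp this.2)
    · intro w
      obtain ⟨x, y, rfl⟩ := hsurj w
      exact ⟨(x, y), rfl⟩
  set e : (g₀ × g₀) ≃ₗ[ℝ] g := LinearEquiv.ofBijective f hbij with hedef
  have he : ∀ s t : g₀, e (s, t) = ι s + κ t := fun s t => rfl
  -- trace principle
  have traceT : ∀ (T : g →ₗ[ℝ] g) (A B C D : g₀ →ₗ[ℝ] g₀),
      (∀ s : g₀, T (ι s) = ι (A s) + κ (C s)) →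
      (∀ t : g₀, T (κ t) = ι (B t) + κ (D t)) →
      LinearMap.trace ℝ g T = LinearMap.trace ℝ g₀ A + LinearMap.trace ℝ g₀ D := by
    intro T A B C D hι hκ
    apply trace_block e T A B C D
    intro s t
    rw [he s t, map_add, hι, hκ, he]
    rw [map_add, map_add]
    abel
  -- ricci values on pure elements
  have ricii : ∀ x y : g₀, ricci nabla' (ι x) (ι y) = 2 * ricci nabla₀ x y := by
    intro x y
    set T₀ : g₀ →ₗ[ℝ] g₀ := nabla₀.flip (nabla₀ x y) - nabla₀ x ∘ₗ nabla₀.flip y +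
      nabla₀.flip y ∘ₗ (LieAlgebra.ad ℝ g₀ x : g₀ →ₗ[ℝ] g₀) with hT₀
    have h : ricci nabla' (ι x) (ι y) =
        LinearMap.trace ℝ g₀ T₀ + LinearMap.trace ℝ g₀ T₀ := by
      apply traceT _ T₀ 0 0 T₀
      · intro s
        simp only [hT₀, LinearMap.neg_apply, LinearMap.add_apply, LinearMap.sub_apply,
          LinearMap.comp_apply, LinearMap.flip_apply, LieAlgebra.ad_apply, LinearMap.zero_apply,
          map_zero, add_zero, zero_add, brii, brik, brki, brkk, hnii, hnik, hnki, hnkk,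
          map_sub, map_add, map_neg]
        try abel
      · intro t
        simp only [hT₀, LinearMap.neg_apply, LinearMap.add_apply, LinearMap.sub_apply,
          LinearMap.comp_apply, LinearMap.flip_apply, LieAlgebra.ad_apply, LinearMap.zero_apply,
          map_zero, add_zero, zero_add, brii, brik, brki, brkk, hnii, hnik, hnki, hnkk,
          map_sub, map_add, map_neg]
        try abel
    rw [h]
    have : ricci nabla₀ x y = LinearMap.trace ℝ g₀ T₀ := rfl
    rw [this]; ring
  have ricik : ∀ x y : g₀, ricci nabla' (ι x) (κ y) = 0 := by
    intro x y
    set T₀ : g₀ →ₗ[ℝ] g₀ := nabla₀.flip (nabla₀ x y) - nabla₀ x ∘ₗ nabla₀.flip y +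
      nabla₀.flip y ∘ₗ (LieAlgebra.ad ℝ g₀ x : g₀ →ₗ[ℝ] g₀) with hT₀
    have h : ricci nabla' (ι x) (κ y) =
        LinearMap.trace ℝ g₀ (0 : g₀ →ₗ[ℝ] g₀) + LinearMap.trace ℝ g₀ (0 : g₀ →ₗ[ℝ] g₀) := by
      apply traceT _ 0 (-T₀) T₀ 0
      · intro s
        simp only [hT₀, LinearMap.neg_apply, LinearMap.add_apply, LinearMap.sub_apply,
          LinearMap.comp_apply, LinearMap.flip_apply, LieAlgebra.ad_apply, LinearMap.zero_apply,
          map_zero, add_zero, zero_add, brii, brik, brki, brkk, hnii, hnik, hnki, hnkk,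
          map_sub, map_add, map_neg]
        try abel
      · intro t
        simp only [hT₀, LinearMap.neg_apply, LinearMap.add_apply, LinearMap.sub_apply,
          LinearMap.comp_apply, LinearMap.flip_apply, LieAlgebra.ad_apply, LinearMap.zero_apply,
          map_zero, add_zero, zero_add, brii, brik, brki, brkk, hnii, hnik, hnki, hnkk,
          map_sub, map_add, map_neg]
        try abel
    rw [h]; simp
  have ricki : ∀ x y : g₀, ricci nabla' (κ x) (ι y) = 0 := by
    intro x y
    set T₀ : g₀ →ₗ[ℝ] g₀ := nabla₀.flip (nabla₀ x y) - nabla₀ x ∘ₗ nabla₀.flip y +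
      nabla₀.flip y ∘ₗ (LieAlgebra.ad ℝ g₀ x : g₀ →ₗ[ℝ] g₀) with hT₀
    have h : ricci nabla' (κ x) (ι y) =
        LinearMap.trace ℝ g₀ (0 : g₀ →ₗ[ℝ] g₀) + LinearMap.trace ℝ g₀ (0 : g₀ →ₗ[ℝ] g₀) := by
      apply traceT _ 0 (-T₀) T₀ 0
      · intro s
        simp only [hT₀, LinearMap.neg_apply, LinearMap.add_apply, LinearMap.sub_apply,
          LinearMap.comp_apply, LinearMap.flip_apply, LieAlgebra.ad_apply, LinearMap.zero_apply,
          map_zero, add_zero, zero_add, brii, brik, brki, brkk, hnii, hnik, hnki, hnkk,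
          map_sub, map_add, map_neg]
        try abel
      · intro t
        simp only [hT₀, LinearMap.neg_apply, LinearMap.add_apply, LinearMap.sub_apply,
          LinearMap.comp_apply, LinearMap.flip_apply, LieAlgebra.ad_apply, LinearMap.zero_apply,
          map_zero, add_zero, zero_add, brii, brik, brki, brkk, hnii, hnik, hnki, hnkk,
          map_sub, map_add, map_neg]
        try abel
    rw [h]; simp
  have rickk : ∀ x y : g₀, ricci nabla' (κ x) (κ y) = -(2 * ricci nabla₀ x y) := by
    intro x y
    set T₀ : g₀ →ₗ[ℝ] g₀ := nabla₀.flip (nabla₀ x y) - nabla₀ x ∘ₗ nabla₀.flip y +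
      nabla₀.flip y ∘ₗ (LieAlgebra.ad ℝ g₀ x : g₀ →ₗ[ℝ] g₀) with hT₀
    have h : ricci nabla' (κ x) (κ y) =
        LinearMap.trace ℝ g₀ (-T₀) + LinearMap.trace ℝ g₀ (-T₀) := by
      apply traceT _ (-T₀) 0 0 (-T₀)
      · intro s
        simp only [hT₀, LinearMap.neg_apply, LinearMap.add_apply, LinearMap.sub_apply,
          LinearMap.comp_apply, LinearMap.flip_apply, LieAlgebra.ad_apply, LinearMap.zero_apply,
          map_zero, add_zero, zero_add, brii, brik, brki, brkk, hnii, hnik, hnki, hnkk,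
          map_sub, map_add, map_neg]
        try abel
      · intro t
        simp only [hT₀, LinearMap.neg_apply, LinearMap.add_apply, LinearMap.sub_apply,
          LinearMap.comp_apply, LinearMap.flip_apply, LieAlgebra.ad_apply, LinearMap.zero_apply,
          map_zero, add_zero, zero_add, brii, brik, brki, brkk, hnii, hnik, hnki, hnkk,
          map_sub, map_add, map_neg]
        try abel
    rw [h, map_neg]
    have : ricci nabla₀ x y = LinearMap.trace ℝ g₀ T₀ := rfl
    rw [this]; ring
  -- conclusion
  intro u w
  obtain ⟨x₁, y₁, rfl⟩ := hsurj u
  obtain ⟨x₂, y₂, rfl⟩ := hsurj w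
  rw [ricci_add_left, ricci_add_right, ricci_add_right,
    ricii, ricik, ricki, rickk, hB', hE, hE]
  ring
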